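/- In any product space X = ∏_{i∈I} X_i, the Noetherian type of X is at most the least infinite κ such that X has a κ^op-like base of open boxes, which in turn is at most the supremum over i ∈ I of the Noetherian types of the factors X_i. -/

import Mathlib

open Cardinal Set

universe u

variable {X : Type u}

/-- `B` is a base for the topology of `X`. -/
def IsBase [TopologicalSpace X] (B : Set (Set X)) : Prop :=
  (∀ U ∈ B, IsOpen U) ∧ ∀ W : Set X, IsOpen W → ∀ p ∈ W, ∃ U ∈ B, p ∈ U ∧ U ⊆ W

/-- `B` is a local base at `p`. -/
def IsLocalBase [TopologicalSpace X] (p : X) (B : Set (Set X)) : Prop :=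
  (∀ U ∈ B, IsOpen U ∧ p ∈ U) ∧ ∀ W : Set X, IsOpen W → p ∈ W → ∃ U ∈ B, U ⊆ W

/-- `B` is a local π-base at `p`. -/
def IsLocalPiBase [TopologicalSpace X] (p : X) (B : Set (Set X)) : Prop :=
  (∀ U ∈ B, IsOpen U ∧ U.Nonempty) ∧ ∀ W : Set X, IsOpen W → p ∈ W → ∃ U ∈ B, U ⊆ W

/-- The weight of `X`: the least infinite cardinal `κ` such that `X` has a base of
cardinality at most `κ`. -/
noncomputable def weight (X : Type u) [TopologicalSpace X] : Cardinal.{u} :=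
  sInf {κ | ℵ₀ ≤ κ ∧ ∃ B : Set (Set X), IsBase B ∧ #B ≤ κ}

/-- The character of `p` in `X`. -/
noncomputable def character [TopologicalSpace X] (p : X) : Cardinal.{u} :=
  sInf {κ | ℵ₀ ≤ κ ∧ ∃ B : Set (Set X), IsLocalBase p B ∧ #B ≤ κ}

/-- The π-character of `p` in `X`. -/
noncomputable def piCharacter [TopologicalSpace X] (p : X) : Cardinal.{u} :=
  sInf {κ | ℵ₀ ≤ κ ∧ ∃ B : Set (Set X), IsLocalPiBase p B ∧ #B ≤ κ}

/-- A family of sets (ordered by `⊆`) is `κ^op`-like if no member is contained in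
`κ`-many members. -/
def IsOpLike {Y : Type u} (B : Set (Set Y)) (κ : Cardinal.{u}) : Prop :=
  ∀ U ∈ B, #{V : Set Y // V ∈ B ∧ U ⊆ V} < κ

/-- The Noetherian type of `X`: the least infinite `κ` such that `X` has a
`κ^op`-like base. -/
noncomputable def Nt (X : Type u) [TopologicalSpace X] : Cardinal.{u} :=
  sInf {κ | ℵ₀ ≤ κ ∧ ∃ B : Set (Set X), IsBase B ∧ IsOpLike B κ}

/-- `⟨F i⟩` is a `⟨#ι, κ⟩`-splitter of `X`: a sequence of finite open covers such
that for every index set `I` of cardinality `κ` and every choice `U i ∈ F i`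
(`i ∈ I`), the interior of `⋂_{i ∈ I} U i` is empty. -/
def IsSplitter [TopologicalSpace X] {ι : Type u} (F : ι → Set (Set X))
    (κ : Cardinal.{u}) : Prop :=
  (∀ i, (F i).Finite ∧ (∀ U ∈ F i, IsOpen U) ∧ ⋃₀ F i = Set.univ) ∧
  ∀ (I : Set ι) (U : ι → Set X), #I = κ → (∀ i ∈ I, U i ∈ F i) →
    interior (⋂ i ∈ I, U i) = ∅

/-- `W` is an open box in the product `∀ i, Y i`: a finite intersection of preimages
of open sets under projections. -/
def IsBoxP {ι : Type u} (Y : ι → Type u) [∀ i, TopologicalSpace (Y i)]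
    (W : Set (∀ i, Y i)) : Prop :=
  ∃ (s : Finset ι) (E : ∀ i, Set (Y i)), (∀ i ∈ s, IsOpen (E i)) ∧
    W = ⋂ i ∈ s, (fun f => f i) ⁻¹' (E i)

/-- The least infinite `κ` such that the product has a `κ^op`-like base of boxes. -/
noncomputable def NtBoxP {ι : Type u} (Y : ι → Type u) [∀ i, TopologicalSpace (Y i)] :
    Cardinal.{u} :=
  sInf {κ | ℵ₀ ≤ κ ∧ ∃ B : Set (Set (∀ i, Y i)),
    IsBase B ∧ (∀ W ∈ B, IsBoxP Y W) ∧ IsOpLike B κ}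

section Aux

open Classical in
/-- A finite product of types each of cardinality `< κ` (with `κ` infinite) has
cardinality `< κ`. -/
lemma mk_pi_lt_of_lt {α : Type u} [Fintype α] (H : α → Type u) {κ : Cardinal.{u}}
    (hκ : ℵ₀ ≤ κ) (h : ∀ a, #(H a) < κ) : #(∀ a, H a) < κ := by
  by_cases hfin : ∀ a, Finite (H a)
  · haveI := hfin
    exact lt_of_lt_of_le (Cardinal.lt_aleph0_of_finite _) hκ
  · push_neg at hfin
    obtain ⟨a, ha⟩ := hfin
    haveI : Infinite (H a) := ha
    have haκ : ℵ₀ ≤ #(H a) := Cardinal.aleph0_le_mk _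
    set μ := Finset.univ.sup (fun a : α => #(H a)) with hμ
    have hμκ : μ < κ := by
      rw [hμ, Finset.sup_lt_iff (lt_of_lt_of_le (lt_of_lt_of_le Cardinal.aleph0_pos hκ) le_rfl)]
      exact fun b _ => h b
    have hμ0 : ℵ₀ ≤ μ := le_trans haκ (Finset.le_sup (f := fun a : α => #(H a)) (Finset.mem_univ a))
    have hle : #(∀ a, H a) ≤ μ ^ #α := by
      rw [Cardinal.mk_pi]
      calc Cardinal.prod (fun a => #(H a)) ≤ Cardinal.prod (fun _ : α => μ) :=
            Cardinal.prod_le_prod _ _ (fun b => Finset.le_sup (f := fun a : α => #(H a)) (Finset.mem_univ b))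
        _ = μ ^ #α := Cardinal.prod_const' α μ
    refine lt_of_le_of_lt (hle.trans ?_) hμκ
    rw [Cardinal.mk_fintype]
    exact_mod_cast Cardinal.power_nat_le hμ0

/-- The defining set of `Nt X` is nonempty. -/
lemma nt_set_nonempty (X : Type u) [TopologicalSpace X] :
    {κ : Cardinal.{u} | ℵ₀ ≤ κ ∧ ∃ B : Set (Set X), IsBase B ∧ IsOpLike B κ}.Nonempty := by
  refine ⟨max ℵ₀ (Order.succ #(Set X)), le_max_left _ _, {U | IsOpen U},
    ⟨fun U h => h, fun W hW p hp => ⟨W, hW, hp, subset_rfl⟩⟩, fun U _ => ?_⟩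
  refine lt_of_le_of_lt (Cardinal.mk_subtype_le _) (lt_of_lt_of_le ?_ (le_max_right _ _))
  exact Order.lt_succ _

lemma nt_mem (X : Type u) [TopologicalSpace X] :
    Nt X ∈ {κ : Cardinal.{u} | ℵ₀ ≤ κ ∧ ∃ B : Set (Set X), IsBase B ∧ IsOpLike B κ} :=
  csInf_mem (nt_set_nonempty X)

end Aux
open Classical in
/-- The main construction: from `κ' i`-op-like bases of the factors, build a
`κ`-op-like base of boxes for the product, where `κ ≥ sup κ' i` is infinite. -/
lemma exists_box_base {ι : Type u} (Y : ι → Type u) [∀ i, TopologicalSpace (Y i)]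
    (pt : ∀ i, Y i) (B : ∀ i, Set (Set (Y i))) (κ' : ι → Cardinal.{u}) (κ : Cardinal.{u})
    (hκ : ℵ₀ ≤ κ) (hκ' : ∀ i, κ' i ≤ κ) (hBase : ∀ i, IsBase (B i))
    (hOp : ∀ i, IsOpLike (B i) (κ' i)) :
    ∃ B' : Set (Set (∀ i, Y i)), IsBase B' ∧ (∀ W ∈ B', IsBoxP Y W) ∧ IsOpLike B' κ := by
  refine ⟨{W | ∃ (s : Finset ι) (U : ∀ i, Set (Y i)),
      (∀ i ∈ s, U i ∈ B i ∧ (U i).Nonempty) ∧ W = ⋂ i ∈ s, (fun f => f i) ⁻¹' (U i)},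
    ⟨?_, ?_⟩, ?_, ?_⟩
  · -- all members open
    rintro W ⟨s, U, hU, rfl⟩
    exact isOpen_biInter_finset fun i hi =>
      ((hBase i).1 _ (hU i hi).1).preimage (continuous_apply i)
  · -- base property
    intro W hW p hp
    obtain ⟨I, u, hu, hsub⟩ := isOpen_pi_iff.1 hW p hp
    have hex : ∀ i, ∃ V, i ∈ I → V ∈ B i ∧ p i ∈ V ∧ V ⊆ u i := by
      intro i
      by_cases hi : i ∈ I
      · obtain ⟨V, hV, hpV, hVu⟩ := (hBase i).2 (u i) (hu i hi).1 (p i) (hu i hi).2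
        exact ⟨V, fun _ => ⟨hV, hpV, hVu⟩⟩
      · exact ⟨∅, fun h => absurd h hi⟩
    choose V hV using hex
    refine ⟨⋂ i ∈ I, (fun f => f i) ⁻¹' (V i),
      ⟨I, V, fun i hi => ⟨(hV i hi).1, ⟨p i, (hV i hi).2.1⟩⟩, rfl⟩,
      Set.mem_iInter₂.2 fun i hi => (hV i hi).2.1, ?_⟩
    intro q hq
    exact hsub (fun i hi => (hV i hi).2.2 (Set.mem_iInter₂.1 hq i hi))
  · -- boxes
    rintro W ⟨s, U, hU, rfl⟩
    exact ⟨s, U, fun i hi => (hBase i).1 _ (hU i hi).1, rfl⟩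
  · -- op-like
    rintro b ⟨s, U, hU, rfl⟩
    -- pick a point of the box
    have hex : ∀ i, ∃ y : Y i, i ∈ s → y ∈ U i := by
      intro i
      by_cases hi : i ∈ s
      · exact ⟨(hU i hi).2.some, fun _ => (hU i hi).2.some_mem⟩
      · exact ⟨pt i, fun h => absurd h hi⟩
    choose u0 hu0 using hex
    set G : ι → Type u := fun i => {V : Set (Y i) // V ∈ B i ∧ U i ⊆ V} with hG
    have key : ∀ W : {V : Set (∀ i, Y i) // V ∈ {W : Set (∀ i, Y i) | ∃ (s : Finset ι) (U : ∀ i, Set (Y i)),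
        (∀ i ∈ s, U i ∈ B i ∧ (U i).Nonempty) ∧ W = ⋂ i ∈ s, (fun f => f i) ⁻¹' (U i)} ∧
        (⋂ i ∈ s, (fun f => f i) ⁻¹' (U i)) ⊆ V},
        ∃ g : ∀ i : s, Option (G i),
          W.1 = ⋂ i : s, Option.elim (g i) Set.univ (fun V => (fun f => f i.1) ⁻¹' V.1) := by
      rintro ⟨W, ⟨t, V, hV, rfl⟩, hbW⟩
      have hts : ∀ i ∈ t, V i ≠ Set.univ → i ∈ s ∧ U i ⊆ V i := by
        intro i hit hVne
        have hmem : ∀ x : Y i, (i ∈ s → x ∈ U i) → x ∈ V i := by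
          intro x hx
          have hb : Function.update u0 i x ∈ ⋂ j ∈ s, (fun f => f j) ⁻¹' (U j) := by
            refine Set.mem_iInter₂.2 fun j hj => ?_
            rcases eq_or_ne j i with rfl | hji
            · simpa using hx hj
            · simpa [Function.update_of_ne hji] using hu0 j hj
          have := Set.mem_iInter₂.1 (hbW hb) i hit
          simpa using this
        have his : i ∈ s := by
          by_contra his
          exact hVne (Set.eq_univ_of_forall fun x => hmem x (fun h => absurd h his))
        exact ⟨his, fun x hx => hmem x (fun _ => hx)⟩
      refine ⟨fun i => if h : (i : ι) ∈ t ∧ U (i : ι) ⊆ V (i : ι) ∧ V (i : ι) ≠ Set.univ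
        then some ⟨V (i : ι), (hV _ h.1).1, h.2.1⟩ else none, ?_⟩
      ext x
      simp only [Set.mem_iInter]
      constructor
      · intro hx i
        by_cases h : (i : ι) ∈ t ∧ U (i : ι) ⊆ V (i : ι) ∧ V (i : ι) ≠ Set.univ
        · rw [dif_pos h]
          exact hx _ h.1
        · rw [dif_neg h]
          exact Set.mem_univ x
      · intro hx i hit
        by_cases hVu : V i = Set.univ
        · simp [hVu]
        · obtain ⟨his, hUV⟩ := hts i hit hVu
          have := hx ⟨i, his⟩
          rw [dif_pos ⟨hit, hUV, hVu⟩] at this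
          exact this
    choose F hF using key
    have hinj : Function.Injective F := by
      intro W₁ W₂ h
      apply Subtype.ext
      rw [hF W₁, hF W₂, h]
    refine lt_of_le_of_lt (Cardinal.mk_le_of_injective hinj) ?_
    refine mk_pi_lt_of_lt _ hκ fun i => ?_
    rw [Cardinal.mk_option]
    refine Cardinal.add_lt_of_lt hκ ?_ (lt_of_lt_of_le Cardinal.one_lt_aleph0 hκ)
    exact lt_of_lt_of_le (hOp i (U i) (hU i i.2).1) (hκ' i)
/-- Peregudov: `Nt(∏ Y i) ≤ Nt_box(∏ Y i) ≤ sup_i Nt(Y i)`. -/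
theorem nt_le_ntBox_le_sup {ι : Type u} [Nonempty ι] (Y : ι → Type u)
    [∀ i, TopologicalSpace (Y i)] :
    Nt (∀ i, Y i) ≤ NtBoxP Y ∧ NtBoxP Y ≤ ⨆ i, Nt (Y i) := by
  have hκ0 : ℵ₀ ≤ ⨆ i, Nt (Y i) :=
    le_trans (nt_mem (Y (Classical.arbitrary ι))).1
      (le_ciSup (Cardinal.bddAbove_range _) (Classical.arbitrary ι))
  have hκmem : (⨆ i, Nt (Y i)) ∈ {κ | ℵ₀ ≤ κ ∧ ∃ B : Set (Set (∀ i, Y i)),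
      IsBase B ∧ (∀ W ∈ B, IsBoxP Y W) ∧ IsOpLike B κ} := by
    refine ⟨hκ0, ?_⟩
    by_cases hne : ∀ i, Nonempty (Y i)
    · have hB : ∀ i, ∃ B : Set (Set (Y i)), IsBase B ∧ IsOpLike B (Nt (Y i)) :=
        fun i => (nt_mem (Y i)).2
      choose B hB using hB
      exact exists_box_base Y (fun i => Classical.choice (hne i)) B (fun i => Nt (Y i)) _
        hκ0 (fun i => le_ciSup (Cardinal.bddAbove_range _) i) (fun i => (hB i).1)
        (fun i => (hB i).2)
    · haveI : IsEmpty (∀ i, Y i) := ⟨fun f => by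
        obtain ⟨i, hi⟩ := not_forall.1 hne
        exact hi ⟨f i⟩⟩
      refine ⟨∅, ⟨fun U h => absurd h (Set.notMem_empty U),
        fun W _ p _ => (this.false p).elim⟩,
        fun W h => absurd h (Set.notMem_empty W),
        fun U h => absurd h (Set.notMem_empty U)⟩
  constructor
  · have h1 := csInf_mem (⟨_, hκmem⟩ : {κ | ℵ₀ ≤ κ ∧ ∃ B : Set (Set (∀ i, Y i)),
      IsBase B ∧ (∀ W ∈ B, IsBoxP Y W) ∧ IsOpLike B κ}.Nonempty)
    obtain ⟨h0, Bb, hBase, _, hOp⟩ := h1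
    exact csInf_le' ⟨h0, Bb, hBase, hOp⟩
  · exact csInf_le' hκmem
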